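/- Let A, B ⊆ ℝⁿ be nonempty compact sets, each regular closed, i.e., A equals the closure of its interior and B equals the closure of its interior. Then the symmetric variational Chamfer energy ∫_A infDist(x, B)² dx + ∫_B infDist(x, A)² dx (integrals with respect to Lebesgue measure) equals 0 if and only if A = B. -/
import Mathlib

open MeasureTheory Metric

/-- If the integral of `infDist · B ^ 2` over a compact regular-closed set `A` vanishes,
then `A ⊆ B` (for `B` nonempty compact). -/
lemma chamfer_aux {n : ℕ} (A B : Set (EuclideanSpace ℝ (Fin n)))
    (hB : B.Nonempty) (hAc : IsCompact A) (hBc : IsCompact B)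
    (hAr : A = closure (interior A))
    (h : (∫ x in A, Metric.infDist x B ^ 2) = 0) : A ⊆ B := by
  set f : EuclideanSpace ℝ (Fin n) → ℝ := fun x => Metric.infDist x B ^ 2 with hf
  have hcont : Continuous f := (continuous_infDist_pt B).pow 2
  have hnonneg : ∀ x, 0 ≤ f x := fun x => sq_nonneg _
  have hint : IntegrableOn f A := hcont.continuousOn.integrableOn_compact hAc
  have hmeas : MeasurableSet A := hAc.isClosed.measurableSet
  have hsupp : volume (Function.support f ∩ A) = 0 := by
    by_contra hpos
    have : 0 < ∫ x in A, f x := by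
      rw [setIntegral_pos_iff_support_of_nonneg_ae
        (Filter.Eventually.of_forall hnonneg : 0 ≤ᵐ[volume.restrict A] f) hint]
      exact (pos_iff_ne_zero.mpr hpos)
    exact absurd h (ne_of_gt this)
  -- every point of the interior of A has infDist to B equal to 0
  have hintA : ∀ x ∈ interior A, Metric.infDist x B = 0 := by
    intro x hx
    by_contra hne
    have hfx : 0 < f x := by
      have : 0 < Metric.infDist x B :=
        lt_of_le_of_ne (Metric.infDist_nonneg) (Ne.symm hne)
      positivity
    have hopen : IsOpen (interior A ∩ f ⁻¹' Set.Ioi 0) :=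
      isOpen_interior.inter (isOpen_Ioi.preimage hcont)
    have hxmem : x ∈ interior A ∩ f ⁻¹' Set.Ioi 0 := ⟨hx, hfx⟩
    have hvol : 0 < volume (interior A ∩ f ⁻¹' Set.Ioi 0) :=
      hopen.measure_pos volume ⟨x, hxmem⟩
    have hsub : interior A ∩ f ⁻¹' Set.Ioi 0 ⊆ Function.support f ∩ A := by
      rintro y ⟨hy1, hy2⟩
      exact ⟨ne_of_gt hy2, interior_subset hy1⟩
    exact absurd (measure_mono_null hsub hsupp) (ne_of_gt hvol)
  -- hence interior A ⊆ B, so A = closure (interior A) ⊆ B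
  have hsub : interior A ⊆ B := fun x hx => by
    have := hintA x hx
    rw [← hBc.isClosed.closure_eq]
    exact (Metric.mem_closure_iff_infDist_zero hB).mpr this
  calc A = closure (interior A) := hAr
    _ ⊆ closure B := closure_mono hsub
    _ = B := hBc.isClosed.closure_eq

/-- For nonempty compact regular-closed sets A and B, the symmetric variational Chamfer
energy ∫_A d_B(x)² dx + ∫_B d_A(x)² dx vanishes iff A = B. -/
theorem chamfer_symm_eq_zero_iff {n : ℕ} (A B : Set (EuclideanSpace ℝ (Fin n)))
    (hA : A.Nonempty) (hB : B.Nonempty) (hAc : IsCompact A) (hBc : IsCompact B)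
    (hAr : A = closure (interior A)) (hBr : B = closure (interior B)) :
    ((∫ x in A, Metric.infDist x B ^ 2) + (∫ x in B, Metric.infDist x A ^ 2)) = 0 ↔ A = B := by
  constructor
  · intro h
    have h1 : 0 ≤ ∫ x in A, Metric.infDist x B ^ 2 :=
      setIntegral_nonneg hAc.isClosed.measurableSet fun x _ => sq_nonneg _
    have h2 : 0 ≤ ∫ x in B, Metric.infDist x A ^ 2 :=
      setIntegral_nonneg hBc.isClosed.measurableSet fun x _ => sq_nonneg _
    have hz1 : (∫ x in A, Metric.infDist x B ^ 2) = 0 := by linarith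
    have hz2 : (∫ x in B, Metric.infDist x A ^ 2) = 0 := by linarith
    exact le_antisymm (chamfer_aux A B hB hAc hBc hAr hz1)
      (chamfer_aux B A hA hBc hAc hBr hz2)
  · intro h
    subst h
    have : ∀ x ∈ A, Metric.infDist x A ^ 2 = (0 : ℝ) := fun x hx => by
      rw [Metric.infDist_zero_of_mem hx]; ring
    have hz : (∫ x in A, Metric.infDist x A ^ 2) = 0 := by
      rw [setIntegral_congr_fun hAc.isClosed.measurableSet this, integral_zero]
    rw [hz]; ring
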